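/- Let ℓ ∈ ℤ≥0 and assume θ₁(2jη|τ) ≠ 0 for 1 ≤ j ≤ 2ℓ. Then the one-site transfer matrix T(λ) and the Q-operator Q(λ) satisfy Baxter's T-Q relation: for every function f : ℂ → ℂ, every λ ∈ ℂ, and every z at which all theta factors appearing in denominators on both sides are nonzero, (T(λ)(Q(λ)f))(z) = θ₁(2λ−2ℓη|τ)·(Q(λ+η)f)(z) + θ₁(2λ+2ℓη|τ)·(Q(λ−η)f)(z). -/

import Mathlib

/-- Jacobi theta function `θ_a(z|τ)` for `a = 1,2,3,4`. -/
noncomputable def jTheta (a : ℕ) (z τ : ℂ) : ℂ :=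
  match a with
  | 1 => -∑' k : ℤ, Complex.exp ((Real.pi : ℂ) * Complex.I * τ * ((k : ℂ) + 1/2)^2
          + 2 * (Real.pi : ℂ) * Complex.I * (z + 1/2) * ((k : ℂ) + 1/2))
  | 2 => ∑' k : ℤ, Complex.exp ((Real.pi : ℂ) * Complex.I * τ * ((k : ℂ) + 1/2)^2
          + 2 * (Real.pi : ℂ) * Complex.I * z * ((k : ℂ) + 1/2))
  | 3 => ∑' k : ℤ, Complex.exp ((Real.pi : ℂ) * Complex.I * τ * (k : ℂ)^2
          + 2 * (Real.pi : ℂ) * Complex.I * z * (k : ℂ))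
  | 4 => ∑' k : ℤ, Complex.exp ((Real.pi : ℂ) * Complex.I * τ * (k : ℂ)^2
          + 2 * (Real.pi : ℂ) * Complex.I * (z + 1/2) * (k : ℂ))
  | _ => 0

/-- Elliptic factorial `[n]! = ∏_{j=1}^{n} θ₁(2jη|τ)`. -/
noncomputable def efac (τ η : ℂ) (n : ℕ) : ℂ :=
  ∏ j ∈ Finset.range n, jTheta 1 (2*((j : ℂ) + 1)*η) τ

/-- Elliptic binomial coefficient `[n choose m] = [n]!/([m]![n−m]!)`. -/
noncomputable def ebinom (τ η : ℂ) (n m : ℕ) : ℂ :=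
  efac τ η n / (efac τ η m * efac τ η (n - m))

/-- The coefficient `A_k(z,λ)` of the one-site Q-operator (spin `ℓ ∈ ℤ≥0`). -/
noncomputable def Acoef (τ η : ℂ) (ℓ k : ℕ) (z lam : ℂ) : ℂ :=
  (-1 : ℂ)^k * (efac τ η ℓ / efac τ η (2*ℓ)) * ebinom τ η ℓ k *
  (∏ j ∈ Finset.range (ℓ - k),
    jTheta 1 (2*z + 2*((ℓ : ℂ) - (j : ℂ))*η) τ * jTheta 1 (2*lam + 2*((ℓ : ℂ) - (j : ℂ))*η) τ /
      jTheta 1 (2*z + 2*lam + 2*((k : ℂ) - (j : ℂ))*η) τ) *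
  (∏ j ∈ Finset.range k,
    jTheta 1 (2*z - 2*((ℓ : ℂ) - (j : ℂ))*η) τ * jTheta 1 (2*lam - 2*((ℓ : ℂ) - (j : ℂ))*η) τ /
      jTheta 1 (2*z + 2*lam + 2*((k : ℂ) + (j : ℂ) - (ℓ : ℂ))*η) τ)

/-- The one-site Q-operator `(Q(λ)f)(z) = ∑_{k=0}^{ℓ} A_k(z,λ)·f(z+(2k−ℓ)η+λ)`. -/
noncomputable def Qop (τ η : ℂ) (ℓ : ℕ) (lam : ℂ) (f : ℂ → ℂ) (z : ℂ) : ℂ :=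
  ∑ k ∈ Finset.range (ℓ+1), Acoef τ η ℓ k z lam * f (z + (2*(k : ℂ) - (ℓ : ℂ))*η + lam)

/-- The one-site (`N = 1`) transfer matrix
`(T(λ)f)(z) = θ₁(2λ)·[θ₁(2z−2ℓη)f(z+η) + θ₁(2z+2ℓη)f(z−η)]/θ₁(2z)`. -/
noncomputable def TopOne (τ η : ℂ) (ℓ : ℕ) (lam : ℂ) (f : ℂ → ℂ) (z : ℂ) : ℂ :=
  jTheta 1 (2*lam) τ *
    (jTheta 1 (2*z - 2*(ℓ : ℂ)*η) τ * f (z + η) + jTheta 1 (2*z + 2*(ℓ : ℂ)*η) τ * f (z - η)) /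
    jTheta 1 (2*z) τ

open Complex Finset

noncomputable section

/-- Generic shifted theta-series summand. -/
def thTerm (c μ τ : ℂ) (k : ℤ) : ℂ :=
  Complex.exp ((Real.pi : ℂ) * Complex.I * τ * ((k : ℂ) + c)^2 + μ * ((k : ℂ) + c))

lemma thTerm_eq_jt (c μ τ : ℂ) (k : ℤ) :
    thTerm c μ τ k = Complex.exp ((Real.pi : ℂ) * Complex.I * τ * c^2 + μ * c) *
      jacobiTheta₂_term k (τ * c + μ / (2 * (Real.pi : ℂ) * Complex.I)) τ := by
  rw [thTerm, jacobiTheta₂_term, ← Complex.exp_add]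
  congr 1
  have hπ : (Real.pi : ℂ) ≠ 0 := Complex.ofReal_ne_zero.mpr Real.pi_ne_zero
  have hI : Complex.I ≠ 0 := Complex.I_ne_zero
  field_simp
  ring

lemma summable_norm_jtterm (z τ : ℂ) (hτ : 0 < τ.im) :
    Summable (fun n : ℤ => ‖jacobiTheta₂_term n z τ‖) := by
  apply Summable.of_nonneg_of_le (fun _ => norm_nonneg _)
    (fun n => norm_jacobiTheta₂_term_le hτ (le_refl |z.im|) le_rfl n)
  simpa using summable_pow_mul_jacobiTheta₂_term_bound |z.im| hτ 0

lemma summable_norm_thTerm (c μ τ : ℂ) (hτ : 0 < τ.im) :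
    Summable (fun k => ‖thTerm c μ τ k‖) := by
  simp_rw [thTerm_eq_jt, norm_mul]
  exact (summable_norm_jtterm _ _ hτ).mul_left _

lemma summable_thTerm (c μ τ : ℂ) (hτ : 0 < τ.im) : Summable (thTerm c μ τ) :=
  (summable_norm_thTerm c μ τ hτ).of_norm

lemma jTheta1_eq (z τ : ℂ) :
    jTheta 1 z τ = -∑' k : ℤ, thTerm (1/2) (2 * (Real.pi : ℂ) * Complex.I * (z + 1/2)) τ k := rfl

lemma jTheta2_eq (z τ : ℂ) :
    jTheta 2 z τ = ∑' k : ℤ, thTerm (1/2) (2 * (Real.pi : ℂ) * Complex.I * z) τ k := rfl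

lemma jTheta3_eq (z τ : ℂ) :
    jTheta 3 z τ = ∑' k : ℤ, thTerm 0 (2 * (Real.pi : ℂ) * Complex.I * z) τ k := by
  simp only [jTheta]
  exact tsum_congr fun k => by unfold thTerm; exact congrArg Complex.exp (by ring)


lemma neg_exp_eq (w : ℂ) : -Complex.exp w = Complex.exp (w + Real.pi * Complex.I) := by
  rw [Complex.exp_add, Complex.exp_pi_mul_I]; ring

lemma hasSum_mul_prod {f g : ℤ → ℂ} (hf : Summable fun k => ‖f k‖)
    (hg : Summable fun k => ‖g k‖) :
    HasSum (fun p : ℤ × ℤ => f p.1 * g p.2) ((∑' k, f k) * (∑' k, g k)) := by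
  rw [tsum_mul_tsum_of_summable_norm hf hg]
  exact (summable_mul_of_summable_norm hf hg).hasSum

def evenSet : Set (ℤ × ℤ) := {p | Even (p.1 + p.2)}

def eEven : (ℤ × ℤ) ≃ evenSet where
  toFun q := ⟨(q.1 + q.2, q.1 - q.2), ⟨q.1, by dsimp; ring⟩⟩
  invFun p := ((p.1.1 + p.1.2)/2, (p.1.1 - p.1.2)/2)
  left_inv q := by
    obtain ⟨m, n⟩ := q
    dsimp
    ext <;> dsimp <;> omega
  right_inv p := by
    obtain ⟨⟨k, l⟩, r, hr⟩ := p
    dsimp at hr ⊢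
    apply Subtype.ext
    dsimp
    ext <;> dsimp <;> omega

def eOdd : (ℤ × ℤ) ≃ (evenSetᶜ : Set (ℤ × ℤ)) where
  toFun q := ⟨(q.1 + q.2, q.1 - q.2 - 1), by
    simp only [Set.mem_compl_iff, evenSet, Set.mem_setOf_eq, Int.even_iff]
    omega⟩
  invFun p := ((p.1.1 + p.1.2 + 1)/2, (p.1.1 - p.1.2 - 1)/2)
  left_inv q := by
    obtain ⟨m, n⟩ := q
    dsimp
    ext <;> dsimp <;> omega
  right_inv p := by
    obtain ⟨⟨k, l⟩, hr⟩ := p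
    simp only [Set.mem_compl_iff, evenSet, Set.mem_setOf_eq, Int.even_iff] at hr
    apply Subtype.ext
    dsimp
    ext <;> dsimp <;> omega

lemma thTerm_odd (τ u v : ℂ) (m n : ℤ) :
    thTerm (1/2) (2*(Real.pi:ℂ)*Complex.I*(u+1/2)) τ (m+n)
      * thTerm (1/2) (2*(Real.pi:ℂ)*Complex.I*(v+1/2)) τ (m-n-1)
    = thTerm 0 (2*(Real.pi:ℂ)*Complex.I*(u+v)) (2*τ) m
      * thTerm (1/2) (2*(Real.pi:ℂ)*Complex.I*(u-v)) (2*τ) n := by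
  simp only [thTerm, ← Complex.exp_add]
  rw [Complex.exp_eq_exp_iff_exists_int]
  exact ⟨m, by push_cast; ring⟩

lemma thTerm_even (τ u v : ℂ) (m n : ℤ) :
    thTerm (1/2) (2*(Real.pi:ℂ)*Complex.I*(u+1/2)) τ (m+n)
      * thTerm (1/2) (2*(Real.pi:ℂ)*Complex.I*(v+1/2)) τ (m-n)
    = -(thTerm (1/2) (2*(Real.pi:ℂ)*Complex.I*(u+v)) (2*τ) m
      * thTerm 0 (2*(Real.pi:ℂ)*Complex.I*(u-v)) (2*τ) n) := by
  simp only [thTerm, ← Complex.exp_add]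
  rw [neg_exp_eq, Complex.exp_eq_exp_iff_exists_int]
  exact ⟨m, by push_cast; ring⟩

lemma jTheta1_mul (τ u v : ℂ) (hτ : 0 < τ.im) :
    jTheta 1 u τ * jTheta 1 v τ =
      jTheta 3 (u+v) (2*τ) * jTheta 2 (u-v) (2*τ)
        - jTheta 2 (u+v) (2*τ) * jTheta 3 (u-v) (2*τ) := by
  have hτ2 : 0 < (2*τ).im := by
    have h2 : (2*τ).im = 2*τ.im := by simp
    rw [h2]; linarith
  have ha := summable_norm_thTerm (1/2) (2*(Real.pi:ℂ)*Complex.I*(u+1/2)) τ hτ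
  have hb := summable_norm_thTerm (1/2) (2*(Real.pi:ℂ)*Complex.I*(v+1/2)) τ hτ
  have hA2 := summable_norm_thTerm (1/2) (2*(Real.pi:ℂ)*Complex.I*(u+v)) (2*τ) hτ2
  have hA3 := summable_norm_thTerm 0 (2*(Real.pi:ℂ)*Complex.I*(u+v)) (2*τ) hτ2
  have hB2 := summable_norm_thTerm (1/2) (2*(Real.pi:ℂ)*Complex.I*(u-v)) (2*τ) hτ2
  have hB3 := summable_norm_thTerm 0 (2*(Real.pi:ℂ)*Complex.I*(u-v)) (2*τ) hτ2
  set F : ℤ × ℤ → ℂ := fun p =>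
    thTerm (1/2) (2*(Real.pi:ℂ)*Complex.I*(u+1/2)) τ p.1
      * thTerm (1/2) (2*(Real.pi:ℂ)*Complex.I*(v+1/2)) τ p.2 with hFdef
  have hFsum : HasSum F
      ((∑' k, thTerm (1/2) (2*(Real.pi:ℂ)*Complex.I*(u+1/2)) τ k)
        * (∑' k, thTerm (1/2) (2*(Real.pi:ℂ)*Complex.I*(v+1/2)) τ k)) :=
    hasSum_mul_prod ha hb
  have heven : HasSum (F ∘ ((↑) : evenSet → ℤ × ℤ))
      (-((∑' k, thTerm (1/2) (2*(Real.pi:ℂ)*Complex.I*(u+v)) (2*τ) k)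
        * (∑' k, thTerm 0 (2*(Real.pi:ℂ)*Complex.I*(u-v)) (2*τ) k))) := by
    rw [← Equiv.hasSum_iff eEven]
    have hpt : (F ∘ ((↑) : evenSet → ℤ × ℤ)) ∘ eEven
        = fun q : ℤ × ℤ => -(thTerm (1/2) (2*(Real.pi:ℂ)*Complex.I*(u+v)) (2*τ) q.1
            * thTerm 0 (2*(Real.pi:ℂ)*Complex.I*(u-v)) (2*τ) q.2) := by
      funext q
      exact thTerm_even τ u v q.1 q.2
    rw [hpt]
    exact (hasSum_mul_prod hA2 hB3).neg
  have hodd : HasSum (F ∘ ((↑) : (evenSetᶜ : Set (ℤ × ℤ)) → ℤ × ℤ))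
      ((∑' k, thTerm 0 (2*(Real.pi:ℂ)*Complex.I*(u+v)) (2*τ) k)
        * (∑' k, thTerm (1/2) (2*(Real.pi:ℂ)*Complex.I*(u-v)) (2*τ) k)) := by
    rw [← Equiv.hasSum_iff eOdd]
    have hpt : (F ∘ ((↑) : (evenSetᶜ : Set (ℤ × ℤ)) → ℤ × ℤ)) ∘ eOdd
        = fun q : ℤ × ℤ => thTerm 0 (2*(Real.pi:ℂ)*Complex.I*(u+v)) (2*τ) q.1
            * thTerm (1/2) (2*(Real.pi:ℂ)*Complex.I*(u-v)) (2*τ) q.2 := by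
      funext q
      exact thTerm_odd τ u v q.1 q.2
    rw [hpt]
    exact hasSum_mul_prod hA3 hB2
  have htot := HasSum.add_isCompl isCompl_compl heven hodd
  have hkey := hFsum.unique htot
  rw [jTheta1_eq u τ, jTheta1_eq v τ, jTheta2_eq (u-v) (2*τ), jTheta2_eq (u+v) (2*τ),
    jTheta3_eq (u-v) (2*τ), jTheta3_eq (u+v) (2*τ), neg_mul_neg, hkey]
  ring

lemma theta1_pf (τ : ℂ) (hτ : 0 < τ.im) (x y : ℂ) :
    jTheta 1 (x+y) τ * jTheta 1 (x-y) τ =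
      jTheta 3 (2*x) (2*τ) * jTheta 2 (2*y) (2*τ)
        - jTheta 2 (2*x) (2*τ) * jTheta 3 (2*y) (2*τ) := by
  rw [jTheta1_mul τ (x+y) (x-y) hτ, show x+y+(x-y) = 2*x by ring, show x+y-(x-y) = 2*y by ring]

/-- Weierstrass three-term identity for `θ₁`. -/
lemma theta1_wti (τ : ℂ) (hτ : 0 < τ.im) (x y u v : ℂ) :
    jTheta 1 (x+y) τ * jTheta 1 (x-y) τ * (jTheta 1 (u+v) τ * jTheta 1 (u-v) τ)
      - jTheta 1 (x+v) τ * jTheta 1 (x-v) τ * (jTheta 1 (u+y) τ * jTheta 1 (u-y) τ)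
    = jTheta 1 (x+u) τ * jTheta 1 (x-u) τ * (jTheta 1 (y+v) τ * jTheta 1 (y-v) τ) := by
  rw [theta1_pf τ hτ x y, theta1_pf τ hτ u v, theta1_pf τ hτ x v, theta1_pf τ hτ u y,
    theta1_pf τ hτ x u, theta1_pf τ hτ y v]
  ring


/-! ### Atoms and core products for the combinatorial part -/

def TZ (τ η w : ℂ) (m : ℤ) : ℂ := jTheta 1 (2*w + 2*(m:ℂ)*η) τ
def TW (τ η z lam : ℂ) (m : ℤ) : ℂ := jTheta 1 (2*z + 2*lam + 2*(m:ℂ)*η) τ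
def TE (τ η : ℂ) (m : ℤ) : ℂ := jTheta 1 (2*(m:ℂ)*η) τ

def Pzz (τ η w : ℂ) (ℓ n : ℕ) : ℂ := ∏ j ∈ Finset.range n, TZ τ η w ((ℓ:ℤ) - j)
def Qzz (τ η w : ℂ) (ℓ n : ℕ) : ℂ := ∏ j ∈ Finset.range n, TZ τ η w ((ℓ:ℤ) - j - 1)
def Pmm (τ η w : ℂ) (ℓ k : ℕ) : ℂ := ∏ j ∈ Finset.range k, TZ τ η w ((j:ℤ) - ℓ)
def Qmm (τ η w : ℂ) (ℓ k : ℕ) : ℂ := ∏ j ∈ Finset.range k, TZ τ η w ((j:ℤ) - ℓ + 1)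
def Pww (τ η z lam : ℂ) (ℓ k : ℕ) : ℂ :=
  (∏ j ∈ Finset.range (ℓ-k-1), TW τ η z lam ((k:ℤ) - j)) *
    (∏ j ∈ Finset.range k, TW τ η z lam ((k:ℤ)+1+j-ℓ))
def CC (τ η : ℂ) (ℓ m : ℕ) : ℂ := efac τ η ℓ / efac τ η (2*ℓ) * ebinom τ η ℓ m

lemma prod_congr_range {n : ℕ} {f g : ℕ → ℂ} (h : ∀ j, j < n → f j = g j) :
    ∏ j ∈ Finset.range n, f j = ∏ j ∈ Finset.range n, g j :=
  Finset.prod_congr rfl (fun j hj => h j (Finset.mem_range.mp hj))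

-- peeling lemmas
lemma TZ_congr (τ η w : ℂ) {a b : ℤ} (h : a = b) : TZ τ η w a = TZ τ η w b := by rw [h]

lemma peel_top (τ η w : ℂ) (ℓ : ℕ) (n : ℕ) :
    ∏ j ∈ Finset.range (n+1), TZ τ η w ((ℓ:ℤ) + 1 - j)
      = Pzz τ η w ℓ n * TZ τ η w ((ℓ:ℤ)+1) := by
  rw [Finset.prod_range_succ' (fun j => TZ τ η w ((ℓ:ℤ) + 1 - j)) n]
  unfold Pzz
  refine congrArg₂ (· * ·) (prod_congr_range fun j _ => TZ_congr _ _ _ (by push_cast; ring))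
    (TZ_congr _ _ _ (by push_cast; ring))

lemma peel_bot (τ η w : ℂ) (ℓ : ℕ) (n : ℕ) :
    ∏ j ∈ Finset.range (n+1), TZ τ η w ((ℓ:ℤ) - j)
      = Pzz τ η w ℓ n * TZ τ η w ((ℓ:ℤ) - n) := by
  rw [Finset.prod_range_succ]
  rfl

lemma rel_Q (τ η w : ℂ) (ℓ : ℕ) (n : ℕ) :
    TZ τ η w ℓ * Qzz τ η w ℓ n = Pzz τ η w ℓ n * TZ τ η w ((ℓ:ℤ) - n) := by
  have h1 : ∏ j ∈ Finset.range (n+1), TZ τ η w ((ℓ:ℤ) - j)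
      = TZ τ η w ℓ * Qzz τ η w ℓ n := by
    rw [Finset.prod_range_succ' (fun j => TZ τ η w ((ℓ:ℤ) - j)) n, mul_comm]
    unfold Qzz
    refine congrArg₂ (· * ·) (TZ_congr _ _ _ (by push_cast; ring))
      (prod_congr_range fun j _ => TZ_congr _ _ _ (by push_cast; ring))
  rw [← h1, peel_bot]

lemma peel_pm (τ η w : ℂ) (ℓ k : ℕ) :
    ∏ j ∈ Finset.range (k+1), TZ τ η w ((j:ℤ) - ℓ)
      = Pmm τ η w ℓ k * TZ τ η w ((k:ℤ) - ℓ) := by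
  rw [Finset.prod_range_succ]
  rfl

lemma peel_pm' (τ η w : ℂ) (ℓ k : ℕ) :
    ∏ j ∈ Finset.range (k+1), TZ τ η w ((j:ℤ) - ℓ - 1)
      = TZ τ η w (-(ℓ:ℤ) - 1) * Pmm τ η w ℓ k := by
  rw [Finset.prod_range_succ' (fun j => TZ τ η w ((j:ℤ) - ℓ - 1)) k, mul_comm]
  unfold Pmm
  refine congrArg₂ (· * ·) (TZ_congr _ _ _ (by push_cast; ring))
    (prod_congr_range fun j _ => TZ_congr _ _ _ (by push_cast; ring))

lemma rel_Qm (τ η w : ℂ) (ℓ k : ℕ) :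
    TZ τ η w (-(ℓ:ℤ)) * Qmm τ η w ℓ k = Pmm τ η w ℓ k * TZ τ η w ((k:ℤ) - ℓ) := by
  have h1 : ∏ j ∈ Finset.range (k+1), TZ τ η w ((j:ℤ) - ℓ)
      = TZ τ η w (-(ℓ:ℤ)) * Qmm τ η w ℓ k := by
    rw [Finset.prod_range_succ' (fun j => TZ τ η w ((j:ℤ) - ℓ)) k, mul_comm]
    unfold Qmm
    refine congrArg₂ (· * ·) (TZ_congr _ _ _ (by push_cast; ring))
      (prod_congr_range fun j _ => TZ_congr _ _ _ (by push_cast; ring))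
  rw [← h1, peel_pm]


lemma TW_congr (τ η z lam : ℂ) {a b : ℤ} (h : a = b) : TW τ η z lam a = TW τ η z lam b := by
  rw [h]

lemma md_congr {a b c a' b' c' : ℂ} (h1 : a = a') (h2 : b = b') (h3 : c = c') :
    a*b/c = a'*b'/c' := by rw [h1, h2, h3]

lemma jT_TZ (τ η w : ℂ) (m : ℤ) {x : ℂ} (h : x = 2*w + 2*(m:ℂ)*η) :
    jTheta 1 x τ = TZ τ η w m := by rw [h]; rfl

lemma jT_TW (τ η z lam : ℂ) (m : ℤ) {x : ℂ} (h : x = 2*z + 2*lam + 2*(m:ℂ)*η) :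
    jTheta 1 x τ = TW τ η z lam m := by rw [h]; rfl

lemma peel_W (τ η z lam : ℂ) (k : ℕ) (n : ℕ) :
    ∏ j ∈ Finset.range (n+1), TW τ η z lam ((k:ℤ) + 1 - j)
      = (∏ j ∈ Finset.range n, TW τ η z lam ((k:ℤ) - j)) * TW τ η z lam ((k:ℤ)+1) := by
  rw [Finset.prod_range_succ' (fun j => TW τ η z lam ((k:ℤ) + 1 - j)) n]
  refine congrArg₂ (· * ·) (prod_congr_range fun j _ => TW_congr _ _ _ _ (by push_cast; ring))
    (TW_congr _ _ _ _ (by push_cast; ring))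

lemma peel_W' (τ η z lam : ℂ) (ℓ k : ℕ) :
    ∏ j ∈ Finset.range (k+1), TW τ η z lam ((k:ℤ) + j - ℓ)
      = TW τ η z lam ((k:ℤ) - ℓ) * ∏ j ∈ Finset.range k, TW τ η z lam ((k:ℤ)+1+j-ℓ) := by
  rw [Finset.prod_range_succ' (fun j => TW τ η z lam ((k:ℤ) + j - ℓ)) k, mul_comm]
  refine congrArg₂ (· * ·) (TW_congr _ _ _ _ (by push_cast; ring))
    (prod_congr_range fun j _ => TW_congr _ _ _ _ (by push_cast; ring))

lemma peel_top_k (τ η w : ℂ) (ℓ k : ℕ) (hk : k < ℓ) :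
    ∏ j ∈ Finset.range (ℓ - k), TZ τ η w ((ℓ:ℤ) + 1 - j)
      = Pzz τ η w ℓ (ℓ-k-1) * TZ τ η w ((ℓ:ℤ)+1) := by
  obtain ⟨n, hn⟩ : ∃ n, ℓ - k = n + 1 := ⟨ℓ-k-1, by omega⟩
  have hn' : ℓ - k - 1 = n := by omega
  rw [hn', hn, peel_top]

lemma peel_bot_k (τ η w : ℂ) (ℓ k : ℕ) (hk : k < ℓ) :
    ∏ j ∈ Finset.range (ℓ - k), TZ τ η w ((ℓ:ℤ) - j)
      = Pzz τ η w ℓ (ℓ-k-1) * TZ τ η w ((k:ℤ)+1) := by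
  obtain ⟨n, hn⟩ : ∃ n, ℓ - k = n + 1 := ⟨ℓ-k-1, by omega⟩
  have hn' : ℓ - k - 1 = n := by omega
  have hc : ((ℓ:ℤ) - (n:ℤ)) = (k:ℤ)+1 := by omega
  rw [hn', hn, peel_bot, hc]

lemma peel_W_k (τ η z lam : ℂ) (ℓ k : ℕ) (hk : k < ℓ) :
    ∏ j ∈ Finset.range (ℓ - k), TW τ η z lam ((k:ℤ) + 1 - j)
      = (∏ j ∈ Finset.range (ℓ-k-1), TW τ η z lam ((k:ℤ) - j)) * TW τ η z lam ((k:ℤ)+1) := by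
  obtain ⟨n, hn⟩ : ∃ n, ℓ - k = n + 1 := ⟨ℓ-k-1, by omega⟩
  have hn' : ℓ - k - 1 = n := by omega
  rw [hn', hn, peel_W]

lemma rel_Q_k (τ η w : ℂ) (ℓ k : ℕ) (hk : k < ℓ) :
    TZ τ η w ℓ * Qzz τ η w ℓ (ℓ-k-1) = Pzz τ η w ℓ (ℓ-k-1) * TZ τ η w ((k:ℤ)+1) := by
  have hc : ((ℓ:ℤ) - ((ℓ-k-1 : ℕ):ℤ)) = (k:ℤ)+1 := by omega
  rw [rel_Q, hc]

lemma Acoef_t1 (τ η z lam : ℂ) (ℓ k : ℕ) (hk : k < ℓ) :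
    Acoef τ η ℓ k (z+η) lam =
      (-1:ℂ)^k * CC τ η ℓ k *
        ((Pzz τ η z ℓ (ℓ-k-1) * TZ τ η z ((ℓ:ℤ)+1)) * (Pzz τ η lam ℓ (ℓ-k-1) * TZ τ η lam ((k:ℤ)+1))
          * (Qmm τ η z ℓ k * Pmm τ η lam ℓ k))
        / (TW τ η z lam ((k:ℤ)+1) * Pww τ η z lam ℓ k) := by
  unfold Acoef
  have e1 : (∏ j ∈ Finset.range (ℓ - k),
      jTheta 1 (2*(z+η) + 2*((ℓ:ℂ) - (j:ℂ))*η) τ * jTheta 1 (2*lam + 2*((ℓ:ℂ) - (j:ℂ))*η) τ /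
        jTheta 1 (2*(z+η) + 2*lam + 2*((k:ℂ) - (j:ℂ))*η) τ)
      = ∏ j ∈ Finset.range (ℓ - k),
        TZ τ η z ((ℓ:ℤ) + 1 - j) * TZ τ η lam ((ℓ:ℤ) - j) / TW τ η z lam ((k:ℤ) + 1 - j) :=
    prod_congr_range fun j _ => md_congr (jT_TZ τ η z _ (by push_cast; ring))
      (jT_TZ τ η lam _ (by push_cast; ring)) (jT_TW τ η z lam _ (by push_cast; ring))
  have e2 : (∏ j ∈ Finset.range k,
      jTheta 1 (2*(z+η) - 2*((ℓ:ℂ) - (j:ℂ))*η) τ * jTheta 1 (2*lam - 2*((ℓ:ℂ) - (j:ℂ))*η) τ /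
        jTheta 1 (2*(z+η) + 2*lam + 2*((k:ℂ) + (j:ℂ) - (ℓ:ℂ))*η) τ)
      = ∏ j ∈ Finset.range k,
        TZ τ η z ((j:ℤ) - ℓ + 1) * TZ τ η lam ((j:ℤ) - ℓ) / TW τ η z lam ((k:ℤ)+1+j-ℓ) :=
    prod_congr_range fun j _ => md_congr (jT_TZ τ η z _ (by push_cast; ring))
      (jT_TZ τ η lam _ (by push_cast; ring)) (jT_TW τ η z lam _ (by push_cast; ring))
  rw [e1, e2, Finset.prod_div_distrib, Finset.prod_mul_distrib,
      Finset.prod_div_distrib, Finset.prod_mul_distrib,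
      peel_top_k τ η z ℓ k hk, peel_bot_k τ η lam ℓ k hk, peel_W_k τ η z lam ℓ k hk]
  unfold CC Pww Qmm Pmm
  ring


lemma Acoef_t2 (τ η z lam : ℂ) (ℓ k : ℕ) (hk : k < ℓ) :
    Acoef τ η ℓ (k+1) (z-η) lam =
      (-1:ℂ)^(k+1) * CC τ η ℓ (k+1) *
        ((Qzz τ η z ℓ (ℓ-k-1) * Pzz τ η lam ℓ (ℓ-k-1))
          * ((TZ τ η z (-(ℓ:ℤ)-1) * Pmm τ η z ℓ k) * (Pmm τ η lam ℓ k * TZ τ η lam ((k:ℤ)-ℓ))))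
        / (TW τ η z lam ((k:ℤ)-ℓ) * Pww τ η z lam ℓ k) := by
  unfold Acoef
  have e1 : (∏ j ∈ Finset.range (ℓ - (k+1)),
      jTheta 1 (2*(z-η) + 2*((ℓ:ℂ) - (j:ℂ))*η) τ * jTheta 1 (2*lam + 2*((ℓ:ℂ) - (j:ℂ))*η) τ /
        jTheta 1 (2*(z-η) + 2*lam + 2*(((k+1:ℕ):ℂ) - (j:ℂ))*η) τ)
      = ∏ j ∈ Finset.range (ℓ - (k+1)),
        TZ τ η z ((ℓ:ℤ) - j - 1) * TZ τ η lam ((ℓ:ℤ) - j) / TW τ η z lam ((k:ℤ) - j) :=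
    prod_congr_range fun j _ => md_congr (jT_TZ τ η z _ (by push_cast; ring))
      (jT_TZ τ η lam _ (by push_cast; ring)) (jT_TW τ η z lam _ (by push_cast; ring))
  have e2 : (∏ j ∈ Finset.range (k+1),
      jTheta 1 (2*(z-η) - 2*((ℓ:ℂ) - (j:ℂ))*η) τ * jTheta 1 (2*lam - 2*((ℓ:ℂ) - (j:ℂ))*η) τ /
        jTheta 1 (2*(z-η) + 2*lam + 2*(((k+1:ℕ):ℂ) + (j:ℂ) - (ℓ:ℂ))*η) τ)
      = ∏ j ∈ Finset.range (k+1),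
        TZ τ η z ((j:ℤ) - ℓ - 1) * TZ τ η lam ((j:ℤ) - ℓ) / TW τ η z lam ((k:ℤ)+j-ℓ) :=
    prod_congr_range fun j _ => md_congr (jT_TZ τ η z _ (by push_cast; ring))
      (jT_TZ τ η lam _ (by push_cast; ring)) (jT_TW τ η z lam _ (by push_cast; ring))
  rw [e1, e2, Finset.prod_div_distrib, Finset.prod_mul_distrib,
      Finset.prod_div_distrib, Finset.prod_mul_distrib,
      peel_pm' τ η z ℓ k, peel_pm τ η lam ℓ k, peel_W' τ η z lam ℓ k,
      show ℓ - (k+1) = ℓ-k-1 from by omega]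
  unfold CC Pww Qzz Pzz
  ring

lemma Acoef_t3 (τ η z lam : ℂ) (ℓ k : ℕ) (hk : k < ℓ) :
    Acoef τ η ℓ k z (lam+η) =
      (-1:ℂ)^k * CC τ η ℓ k *
        ((Pzz τ η z ℓ (ℓ-k-1) * TZ τ η z ((k:ℤ)+1)) * (Pzz τ η lam ℓ (ℓ-k-1) * TZ τ η lam ((ℓ:ℤ)+1))
          * (Pmm τ η z ℓ k * Qmm τ η lam ℓ k))
        / (TW τ η z lam ((k:ℤ)+1) * Pww τ η z lam ℓ k) := by
  unfold Acoef
  have e1 : (∏ j ∈ Finset.range (ℓ - k),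
      jTheta 1 (2*z + 2*((ℓ:ℂ) - (j:ℂ))*η) τ * jTheta 1 (2*(lam+η) + 2*((ℓ:ℂ) - (j:ℂ))*η) τ /
        jTheta 1 (2*z + 2*(lam+η) + 2*((k:ℂ) - (j:ℂ))*η) τ)
      = ∏ j ∈ Finset.range (ℓ - k),
        TZ τ η z ((ℓ:ℤ) - j) * TZ τ η lam ((ℓ:ℤ) + 1 - j) / TW τ η z lam ((k:ℤ) + 1 - j) :=
    prod_congr_range fun j _ => md_congr (jT_TZ τ η z _ (by push_cast; ring))
      (jT_TZ τ η lam _ (by push_cast; ring)) (jT_TW τ η z lam _ (by push_cast; ring))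
  have e2 : (∏ j ∈ Finset.range k,
      jTheta 1 (2*z - 2*((ℓ:ℂ) - (j:ℂ))*η) τ * jTheta 1 (2*(lam+η) - 2*((ℓ:ℂ) - (j:ℂ))*η) τ /
        jTheta 1 (2*z + 2*(lam+η) + 2*((k:ℂ) + (j:ℂ) - (ℓ:ℂ))*η) τ)
      = ∏ j ∈ Finset.range k,
        TZ τ η z ((j:ℤ) - ℓ) * TZ τ η lam ((j:ℤ) - ℓ + 1) / TW τ η z lam ((k:ℤ)+1+j-ℓ) :=
    prod_congr_range fun j _ => md_congr (jT_TZ τ η z _ (by push_cast; ring))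
      (jT_TZ τ η lam _ (by push_cast; ring)) (jT_TW τ η z lam _ (by push_cast; ring))
  rw [e1, e2, Finset.prod_div_distrib, Finset.prod_mul_distrib,
      Finset.prod_div_distrib, Finset.prod_mul_distrib,
      peel_bot_k τ η z ℓ k hk, peel_top_k τ η lam ℓ k hk, peel_W_k τ η z lam ℓ k hk]
  unfold CC Pww Pmm Qmm
  ring

lemma Acoef_t4 (τ η z lam : ℂ) (ℓ k : ℕ) (hk : k < ℓ) :
    Acoef τ η ℓ (k+1) z (lam-η) =
      (-1:ℂ)^(k+1) * CC τ η ℓ (k+1) *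
        ((Pzz τ η z ℓ (ℓ-k-1) * Qzz τ η lam ℓ (ℓ-k-1))
          * ((Pmm τ η z ℓ k * TZ τ η z ((k:ℤ)-ℓ)) * (TZ τ η lam (-(ℓ:ℤ)-1) * Pmm τ η lam ℓ k)))
        / (TW τ η z lam ((k:ℤ)-ℓ) * Pww τ η z lam ℓ k) := by
  unfold Acoef
  have e1 : (∏ j ∈ Finset.range (ℓ - (k+1)),
      jTheta 1 (2*z + 2*((ℓ:ℂ) - (j:ℂ))*η) τ * jTheta 1 (2*(lam-η) + 2*((ℓ:ℂ) - (j:ℂ))*η) τ /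
        jTheta 1 (2*z + 2*(lam-η) + 2*(((k+1:ℕ):ℂ) - (j:ℂ))*η) τ)
      = ∏ j ∈ Finset.range (ℓ - (k+1)),
        TZ τ η z ((ℓ:ℤ) - j) * TZ τ η lam ((ℓ:ℤ) - j - 1) / TW τ η z lam ((k:ℤ) - j) :=
    prod_congr_range fun j _ => md_congr (jT_TZ τ η z _ (by push_cast; ring))
      (jT_TZ τ η lam _ (by push_cast; ring)) (jT_TW τ η z lam _ (by push_cast; ring))
  have e2 : (∏ j ∈ Finset.range (k+1),
      jTheta 1 (2*z - 2*((ℓ:ℂ) - (j:ℂ))*η) τ * jTheta 1 (2*(lam-η) - 2*((ℓ:ℂ) - (j:ℂ))*η) τ /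
        jTheta 1 (2*z + 2*(lam-η) + 2*(((k+1:ℕ):ℂ) + (j:ℂ) - (ℓ:ℂ))*η) τ)
      = ∏ j ∈ Finset.range (k+1),
        TZ τ η z ((j:ℤ) - ℓ) * TZ τ η lam ((j:ℤ) - ℓ - 1) / TW τ η z lam ((k:ℤ)+j-ℓ) :=
    prod_congr_range fun j _ => md_congr (jT_TZ τ η z _ (by push_cast; ring))
      (jT_TZ τ η lam _ (by push_cast; ring)) (jT_TW τ η z lam _ (by push_cast; ring))
  rw [e1, e2, Finset.prod_div_distrib, Finset.prod_mul_distrib,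
      Finset.prod_div_distrib, Finset.prod_mul_distrib,
      peel_pm τ η z ℓ k, peel_pm' τ η lam ℓ k, peel_W' τ η z lam ℓ k,
      show ℓ - (k+1) = ℓ-k-1 from by omega]
  unfold CC Pww Pzz Qzz
  ring


lemma CC_succ (τ η : ℂ) (ℓ k : ℕ) (hk : k < ℓ)
    (hgen : ∀ j : ℕ, 1 ≤ j → j ≤ 2*ℓ → jTheta 1 (2*(j:ℂ)*η) τ ≠ 0) :
    TE τ η ((k:ℤ)+1) * CC τ η ℓ (k+1) = TE τ η ((ℓ:ℤ)-k) * CC τ η ℓ k := by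
  have hfac : ∀ n : ℕ, n ≤ 2*ℓ → efac τ η n ≠ 0 := by
    intro n hn
    unfold efac
    rw [Finset.prod_ne_zero_iff]
    intro j hj
    have h2 := hgen (j+1) (by omega) (by have := Finset.mem_range.mp hj; omega)
    rw [show 2*((j:ℂ)+1)*η = 2*((j+1:ℕ):ℂ)*η from by push_cast; ring]
    exact h2
  obtain ⟨n, hn⟩ : ∃ n, ℓ - k = n + 1 := ⟨ℓ-k-1, by omega⟩
  have ha : TE τ η ((k:ℤ)+1) = jTheta 1 (2*((k:ℂ)+1)*η) τ := by
    unfold TE; congr 2; push_cast; ring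
  have hb : TE τ η ((ℓ:ℤ)-k) = jTheta 1 (2*((n:ℂ)+1)*η) τ := by
    unfold TE; congr 2
    have h3 : ((ℓ:ℤ)-k) = ((n+1 : ℕ) : ℤ) := by omega
    rw [h3]; push_cast; ring
  have e1 : efac τ η (k+1) = efac τ η k * jTheta 1 (2*((k:ℂ)+1)*η) τ :=
    Finset.prod_range_succ _ _
  have e2 : efac τ η (ℓ-k) = efac τ η n * jTheta 1 (2*((n:ℂ)+1)*η) τ := by
    rw [hn]; exact Finset.prod_range_succ _ _
  have e3 : ℓ - (k+1) = n := by omega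
  have hth1 : jTheta 1 (2*((k:ℂ)+1)*η) τ ≠ 0 := by
    have h2 := hgen (k+1) (by omega) (by omega)
    rw [show 2*((k:ℂ)+1)*η = 2*((k+1:ℕ):ℂ)*η from by push_cast; ring]
    exact h2
  have hth2 : jTheta 1 (2*((n:ℂ)+1)*η) τ ≠ 0 := by
    have h2 := hgen (n+1) (by omega) (by omega)
    rw [show 2*((n:ℂ)+1)*η = 2*((n+1:ℕ):ℂ)*η from by push_cast; ring]
    exact h2
  unfold CC ebinom
  rw [ha, hb, e1, e3, e2]
  have h1 := hfac k (by omega)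
  have h2 := hfac n (by omega)
  have h3 := hfac (2*ℓ) (by omega)
  field_simp
  exact (mul_div_cancel_right₀ _ (by convert hth2 using 2; ring)).symm

lemma theta1_wti' (τ : ℂ) (hτ : 0 < τ.im) (x y u v : ℂ) {A B C D E F G H I J K L : ℂ}
    (hA : A = x+y) (hB : B = x-y) (hC : C = u+v) (hD : D = u-v)
    (hE : E = x+v) (hF : F = x-v) (hG : G = u+y) (hH : H = u-y)
    (hI : I = x+u) (hJ : J = x-u) (hK : K = y+v) (hL : L = y-v) :
    jTheta 1 A τ * jTheta 1 B τ * (jTheta 1 C τ * jTheta 1 D τ)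
      - jTheta 1 E τ * jTheta 1 F τ * (jTheta 1 G τ * jTheta 1 H τ)
    = jTheta 1 I τ * jTheta 1 J τ * (jTheta 1 K τ * jTheta 1 L τ) := by
  subst hA hB hC hD hE hF hG hH hI hJ hK hL
  exact theta1_wti τ hτ x y u v

lemma wti_inst1 (τ η z lam : ℂ) (hτ : 0 < τ.im) (ℓ k : ℕ) :
    TZ τ η z ((ℓ:ℤ)+1) * TZ τ η lam ((k:ℤ)+1) * (TZ τ η z ((k:ℤ)-ℓ) * TZ τ η lam 0)
      - TZ τ η z ((k:ℤ)+1) * TZ τ η lam ((ℓ:ℤ)+1) * (TZ τ η z 0 * TZ τ η lam ((k:ℤ)-ℓ))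
    = TW τ η z lam ((k:ℤ)+1) * TE τ η ((ℓ:ℤ)+1)
        * (jTheta 1 (2*z-2*lam) τ * TE τ η ((ℓ:ℤ)-k)) := by
  unfold TZ TW TE
  exact theta1_wti' τ hτ (z+lam+((ℓ:ℂ)+(k:ℂ)+2)*η) (z-lam+((ℓ:ℂ)-(k:ℂ))*η)
      (z+lam-((ℓ:ℂ)-(k:ℂ))*η) (z-lam-((ℓ:ℂ)-(k:ℂ))*η)
      (by push_cast; ring) (by push_cast; ring) (by push_cast; ring) (by push_cast; ring)
      (by push_cast; ring) (by push_cast; ring) (by push_cast; ring) (by push_cast; ring)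
      (by push_cast; ring) (by push_cast; ring) (by push_cast; ring) (by push_cast; ring)

lemma wti_inst2 (τ η z lam : ℂ) (hτ : 0 < τ.im) (ℓ k : ℕ) :
    TZ τ η z ((k:ℤ)+1) * TZ τ η lam ((k:ℤ)-ℓ) * (TZ τ η z (-(ℓ:ℤ)-1) * TZ τ η lam 0)
      - TZ τ η z ((k:ℤ)-ℓ) * TZ τ η lam ((k:ℤ)+1) * (TZ τ η z 0 * TZ τ η lam (-(ℓ:ℤ)-1))
    = TW τ η z lam ((k:ℤ)-ℓ) * TE τ η ((k:ℤ)+1)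
        * (jTheta 1 (2*z-2*lam) τ * TE τ η ((ℓ:ℤ)+1)) := by
  unfold TZ TW TE
  exact theta1_wti' τ hτ (z+lam+(2*(k:ℂ)-(ℓ:ℂ)+1)*η) (z-lam+((ℓ:ℂ)+1)*η)
      (z+lam-((ℓ:ℂ)+1)*η) (z-lam-((ℓ:ℂ)+1)*η)
      (by push_cast; ring) (by push_cast; ring) (by push_cast; ring) (by push_cast; ring)
      (by push_cast; ring) (by push_cast; ring) (by push_cast; ring) (by push_cast; ring)
      (by push_cast; ring) (by push_cast; ring) (by push_cast; ring) (by push_cast; ring)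


lemma divMulHelper (A W V P E : ℂ) (hW : W ≠ 0) (hP : P ≠ 0) :
    A/(W*P)*(W*V*P*E) = A*(V*E) := by
  field_simp

lemma interior_step (τ η z lam : ℂ) (hτ : 0 < τ.im) (ℓ k : ℕ) (hk : k < ℓ)
    (hgen : ∀ j : ℕ, 1 ≤ j → j ≤ 2*ℓ → jTheta 1 (2*(j:ℂ)*η) τ ≠ 0)
    (hden : ∀ c : ℤ, c.natAbs ≤ ℓ + 1 → jTheta 1 (2*z + 2*lam + 2*(c:ℂ)*η) τ ≠ 0) :
    jTheta 1 (2*lam) τ * (jTheta 1 (2*z - 2*(ℓ:ℂ)*η) τ * Acoef τ η ℓ k (z+η) lam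
        + jTheta 1 (2*z + 2*(ℓ:ℂ)*η) τ * Acoef τ η ℓ (k+1) (z-η) lam)
      = jTheta 1 (2*z) τ * (jTheta 1 (2*lam - 2*(ℓ:ℂ)*η) τ * Acoef τ η ℓ k z (lam+η)
        + jTheta 1 (2*lam + 2*(ℓ:ℂ)*η) τ * Acoef τ η ℓ (k+1) z (lam-η)) := by
  have hW1 : TW τ η z lam ((k:ℤ)+1) ≠ 0 := hden _ (by omega)
  have hW2 : TW τ η z lam ((k:ℤ)-ℓ) ≠ 0 := hden _ (by omega)
  have hPw : Pww τ η z lam ℓ k ≠ 0 := by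
    unfold Pww
    apply mul_ne_zero
    · rw [Finset.prod_ne_zero_iff]
      intro j hj
      have hj' := Finset.mem_range.mp hj
      exact hden _ (by omega)
    · rw [Finset.prod_ne_zero_iff]
      intro j hj
      have hj' := Finset.mem_range.mp hj
      exact hden _ (by omega)
  have hE1 : TE τ η ((k:ℤ)+1) ≠ 0 := by
    have h2 := hgen (k+1) (by omega) (by omega)
    unfold TE
    push_cast
    push_cast at h2
    exact h2
  have hr1 := rel_Q_k τ η z ℓ k hk
  have hr2 := rel_Q_k τ η lam ℓ k hk
  have hr3 := rel_Qm τ η z ℓ k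
  have hr4 := rel_Qm τ η lam ℓ k
  have hr5 := CC_succ τ η ℓ k hk hgen
  have hw1 := wti_inst1 τ η z lam hτ ℓ k
  have hw2 := wti_inst2 τ η z lam hτ ℓ k
  have h1 := divMulHelper ((-1:ℂ)^k * CC τ η ℓ k * ((Pzz τ η z ℓ (ℓ-k-1)*TZ τ η z ((ℓ:ℤ)+1))*(Pzz τ η lam ℓ (ℓ-k-1)*TZ τ η lam ((k:ℤ)+1))*(Qmm τ η z ℓ k*Pmm τ η lam ℓ k))) (TW τ η z lam ((k:ℤ)+1)) (TW τ η z lam ((k:ℤ)-ℓ)) (Pww τ η z lam ℓ k) (TE τ η ((k:ℤ)+1)) hW1 hPw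
  have h2 := divMulHelper ((-1:ℂ)^(k+1) * CC τ η ℓ (k+1) * ((Qzz τ η z ℓ (ℓ-k-1)*Pzz τ η lam ℓ (ℓ-k-1))*((TZ τ η z (-(ℓ:ℤ)-1)*Pmm τ η z ℓ k)*(Pmm τ η lam ℓ k*TZ τ η lam ((k:ℤ)-ℓ))))) (TW τ η z lam ((k:ℤ)-ℓ)) (TW τ η z lam ((k:ℤ)+1)) (Pww τ η z lam ℓ k) (TE τ η ((k:ℤ)+1)) hW2 hPw
  have h3 := divMulHelper ((-1:ℂ)^k * CC τ η ℓ k * ((Pzz τ η z ℓ (ℓ-k-1)*TZ τ η z ((k:ℤ)+1))*(Pzz τ η lam ℓ (ℓ-k-1)*TZ τ η lam ((ℓ:ℤ)+1))*(Pmm τ η z ℓ k*Qmm τ η lam ℓ k))) (TW τ η z lam ((k:ℤ)+1)) (TW τ η z lam ((k:ℤ)-ℓ)) (Pww τ η z lam ℓ k) (TE τ η ((k:ℤ)+1)) hW1 hPw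
  have h4 := divMulHelper ((-1:ℂ)^(k+1) * CC τ η ℓ (k+1) * ((Pzz τ η z ℓ (ℓ-k-1)*Qzz τ η lam ℓ (ℓ-k-1))*((Pmm τ η z ℓ k*TZ τ η z ((k:ℤ)-ℓ))*(TZ τ η lam (-(ℓ:ℤ)-1)*Pmm τ η lam ℓ k)))) (TW τ η z lam ((k:ℤ)-ℓ)) (TW τ η z lam ((k:ℤ)+1)) (Pww τ η z lam ℓ k) (TE τ η ((k:ℤ)+1)) hW2 hPw
  rw [jT_TZ (x := 2*lam) τ η lam 0 (by push_cast; ring),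
      jT_TZ (x := 2*z - 2*(ℓ:ℂ)*η) τ η z (-(ℓ:ℤ)) (by push_cast; ring),
      jT_TZ (x := 2*z + 2*(ℓ:ℂ)*η) τ η z (ℓ:ℤ) (by push_cast; ring),
      jT_TZ (x := 2*z) τ η z 0 (by push_cast; ring),
      jT_TZ (x := 2*lam - 2*(ℓ:ℂ)*η) τ η lam (-(ℓ:ℤ)) (by push_cast; ring),
      jT_TZ (x := 2*lam + 2*(ℓ:ℂ)*η) τ η lam (ℓ:ℤ) (by push_cast; ring),
      Acoef_t1 τ η z lam ℓ k hk, Acoef_t2 τ η z lam ℓ k hk,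
      Acoef_t3 τ η z lam ℓ k hk, Acoef_t4 τ η z lam ℓ k hk]
  have hM : (TW τ η z lam ((k:ℤ)+1)*TW τ η z lam ((k:ℤ)-ℓ)*Pww τ η z lam ℓ k*TE τ η ((k:ℤ)+1)) ≠ 0 :=
    mul_ne_zero (mul_ne_zero (mul_ne_zero hW1 hW2) hPw) hE1
  apply mul_right_cancel₀ hM
  linear_combination (norm := ring_nf)
    ((TZ τ η lam 0)*(TZ τ η z (-(ℓ:ℤ))))*h1 + ((TZ τ η lam 0)*(TZ τ η z (ℓ:ℤ)))*h2 - ((TZ τ η z 0)*(TZ τ η lam (-(ℓ:ℤ))))*h3 - ((TZ τ η z 0)*(TZ τ η lam (ℓ:ℤ)))*h4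
    + ((-1:ℂ)^k*CC τ η ℓ k*(TZ τ η lam 0)*(TW τ η z lam ((k:ℤ)-ℓ))*(TE τ η ((k:ℤ)+1))*(Pzz τ η z ℓ (ℓ-k-1))*(TZ τ η z ((ℓ:ℤ)+1))*(Pzz τ η lam ℓ (ℓ-k-1))*(TZ τ η lam ((k:ℤ)+1))*(Pmm τ η lam ℓ k))*hr3 + (-(-1:ℂ)^k*(TE τ η ((ℓ:ℤ)-k))*(CC τ η ℓ k)*(TZ τ η lam 0)*(TW τ η z lam ((k:ℤ)+1))*(Pzz τ η lam ℓ (ℓ-k-1))*(TZ τ η z (-(ℓ:ℤ)-1))*(Pmm τ η z ℓ k)*(Pmm τ η lam ℓ k)*(TZ τ η lam ((k:ℤ)-ℓ)))*hr1 - (-(-1:ℂ)^k*(TE τ η ((ℓ:ℤ)-k))*(CC τ η ℓ k)*(TZ τ η z 0)*(Pzz τ η z ℓ (ℓ-k-1))*(Pmm τ η z ℓ k)*(TZ τ η z ((k:ℤ)-ℓ))*(TZ τ η lam (-(ℓ:ℤ)-1))*(Pmm τ η lam ℓ k)*(TW τ η z lam ((k:ℤ)+1)))*hr2 - ((-1:ℂ)^k*CC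 τ η ℓ k*(TZ τ η z 0)*(TW τ η z lam ((k:ℤ)-ℓ))*(TE τ η ((k:ℤ)+1))*(Pzz τ η z ℓ (ℓ-k-1))*(TZ τ η z ((k:ℤ)+1))*(Pzz τ η lam ℓ (ℓ-k-1))*(TZ τ η lam ((ℓ:ℤ)+1))*(Pmm τ η z ℓ k))*hr4 + ((-(-1:ℂ)^k*(TZ τ η lam 0)*(TZ τ η z (ℓ:ℤ))*(Qzz τ η z ℓ (ℓ-k-1))*(Pzz τ η lam ℓ (ℓ-k-1))*(TZ τ η z (-(ℓ:ℤ)-1))*(Pmm τ η z ℓ k)*(Pmm τ η lam ℓ k)*(TZ τ η lam ((k:ℤ)-ℓ))*(TW τ η z lam ((k:ℤ)+1))) - (-(-1:ℂ)^k*(TZ τ η z 0)*(TZ τ η lam (ℓ:ℤ))*(Pzz τ η z ℓ (ℓ-k-1))*(Qzz τ η lam ℓ (ℓ-k-1))*(Pmm τ η z ℓ k)*(TZ τ η z ((k:ℤ)-ℓ))*(TZ τ η lam (-(ℓ:ℤ)-1))*(Pmm τ η lam ℓ k)*(TW τ η z lam ((k:ℤ)+1))))*hr5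
    + (((-1:ℂ)^k*CC τ η ℓ k*(Pzz τ η z ℓ (ℓ-k-1))*(Pzz τ η lam ℓ (ℓ-k-1))*(Pmm τ η z ℓ k)*(Pmm τ η lam ℓ k))*(TW τ η z lam ((k:ℤ)-ℓ))*(TE τ η ((k:ℤ)+1)))*hw1 - (((-1:ℂ)^k*CC τ η ℓ k*(Pzz τ η z ℓ (ℓ-k-1))*(Pzz τ η lam ℓ (ℓ-k-1))*(Pmm τ η z ℓ k)*(Pmm τ η lam ℓ k))*(TE τ η ((ℓ:ℤ)-k))*(TW τ η z lam ((k:ℤ)+1)))*hw2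


lemma Acoef_top1 (τ η z lam : ℂ) (ℓ : ℕ) :
    Acoef τ η ℓ ℓ (z+η) lam =
      (-1:ℂ)^ℓ * CC τ η ℓ ℓ * (Qmm τ η z ℓ ℓ * Pmm τ η lam ℓ ℓ)
        / (∏ j ∈ Finset.range ℓ, TW τ η z lam ((j:ℤ)+1)) := by
  unfold Acoef
  rw [show ℓ - ℓ = 0 from by omega, Finset.prod_range_zero]
  have e2 : (∏ j ∈ Finset.range ℓ,
      jTheta 1 (2*(z+η) - 2*((ℓ:ℂ) - (j:ℂ))*η) τ * jTheta 1 (2*lam - 2*((ℓ:ℂ) - (j:ℂ))*η) τ /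
        jTheta 1 (2*(z+η) + 2*lam + 2*((ℓ:ℂ) + (j:ℂ) - (ℓ:ℂ))*η) τ)
      = ∏ j ∈ Finset.range ℓ,
        TZ τ η z ((j:ℤ) - ℓ + 1) * TZ τ η lam ((j:ℤ) - ℓ) / TW τ η z lam ((j:ℤ)+1) :=
    prod_congr_range fun j _ => md_congr (jT_TZ τ η z _ (by push_cast; ring))
      (jT_TZ τ η lam _ (by push_cast; ring)) (jT_TW τ η z lam _ (by push_cast; ring))
  rw [e2, Finset.prod_div_distrib, Finset.prod_mul_distrib]
  unfold CC Qmm Pmm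
  ring

lemma Acoef_top3 (τ η z lam : ℂ) (ℓ : ℕ) :
    Acoef τ η ℓ ℓ z (lam+η) =
      (-1:ℂ)^ℓ * CC τ η ℓ ℓ * (Pmm τ η z ℓ ℓ * Qmm τ η lam ℓ ℓ)
        / (∏ j ∈ Finset.range ℓ, TW τ η z lam ((j:ℤ)+1)) := by
  unfold Acoef
  rw [show ℓ - ℓ = 0 from by omega, Finset.prod_range_zero]
  have e2 : (∏ j ∈ Finset.range ℓ,
      jTheta 1 (2*z - 2*((ℓ:ℂ) - (j:ℂ))*η) τ * jTheta 1 (2*(lam+η) - 2*((ℓ:ℂ) - (j:ℂ))*η) τ /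
        jTheta 1 (2*z + 2*(lam+η) + 2*((ℓ:ℂ) + (j:ℂ) - (ℓ:ℂ))*η) τ)
      = ∏ j ∈ Finset.range ℓ,
        TZ τ η z ((j:ℤ) - ℓ) * TZ τ η lam ((j:ℤ) - ℓ + 1) / TW τ η z lam ((j:ℤ)+1) :=
    prod_congr_range fun j _ => md_congr (jT_TZ τ η z _ (by push_cast; ring))
      (jT_TZ τ η lam _ (by push_cast; ring)) (jT_TW τ η z lam _ (by push_cast; ring))
  rw [e2, Finset.prod_div_distrib, Finset.prod_mul_distrib]
  unfold CC Qmm Pmm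
  ring

lemma Acoef_bot2 (τ η z lam : ℂ) (ℓ : ℕ) :
    Acoef τ η ℓ 0 (z-η) lam =
      CC τ η ℓ 0 * (Qzz τ η z ℓ ℓ * Pzz τ η lam ℓ ℓ)
        / (∏ j ∈ Finset.range ℓ, TW τ η z lam (-(j:ℤ)-1)) := by
  unfold Acoef
  rw [Nat.sub_zero, Finset.prod_range_zero]
  have e1 : (∏ j ∈ Finset.range ℓ,
      jTheta 1 (2*(z-η) + 2*((ℓ:ℂ) - (j:ℂ))*η) τ * jTheta 1 (2*lam + 2*((ℓ:ℂ) - (j:ℂ))*η) τ /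
        jTheta 1 (2*(z-η) + 2*lam + 2*(((0:ℕ):ℂ) - (j:ℂ))*η) τ)
      = ∏ j ∈ Finset.range ℓ,
        TZ τ η z ((ℓ:ℤ) - j - 1) * TZ τ η lam ((ℓ:ℤ) - j) / TW τ η z lam (-(j:ℤ)-1) :=
    prod_congr_range fun j _ => md_congr (jT_TZ τ η z _ (by push_cast; ring))
      (jT_TZ τ η lam _ (by push_cast; ring)) (jT_TW τ η z lam _ (by push_cast; ring))
  rw [e1, Finset.prod_div_distrib, Finset.prod_mul_distrib]
  unfold CC Qzz Pzz
  ring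

lemma Acoef_bot4 (τ η z lam : ℂ) (ℓ : ℕ) :
    Acoef τ η ℓ 0 z (lam-η) =
      CC τ η ℓ 0 * (Pzz τ η z ℓ ℓ * Qzz τ η lam ℓ ℓ)
        / (∏ j ∈ Finset.range ℓ, TW τ η z lam (-(j:ℤ)-1)) := by
  unfold Acoef
  rw [Nat.sub_zero, Finset.prod_range_zero]
  have e1 : (∏ j ∈ Finset.range ℓ,
      jTheta 1 (2*z + 2*((ℓ:ℂ) - (j:ℂ))*η) τ * jTheta 1 (2*(lam-η) + 2*((ℓ:ℂ) - (j:ℂ))*η) τ /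
        jTheta 1 (2*z + 2*(lam-η) + 2*(((0:ℕ):ℂ) - (j:ℂ))*η) τ)
      = ∏ j ∈ Finset.range ℓ,
        TZ τ η z ((ℓ:ℤ) - j) * TZ τ η lam ((ℓ:ℤ) - j - 1) / TW τ η z lam (-(j:ℤ)-1) :=
    prod_congr_range fun j _ => md_congr (jT_TZ τ η z _ (by push_cast; ring))
      (jT_TZ τ η lam _ (by push_cast; ring)) (jT_TW τ η z lam _ (by push_cast; ring))
  rw [e1, Finset.prod_div_distrib, Finset.prod_mul_distrib]
  unfold CC Qzz Pzz
  ring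

lemma boundary_top (τ η z lam : ℂ) (ℓ : ℕ) :
    jTheta 1 (2*lam) τ * (jTheta 1 (2*z - 2*(ℓ:ℂ)*η) τ * Acoef τ η ℓ ℓ (z+η) lam)
      = jTheta 1 (2*z) τ * (jTheta 1 (2*lam - 2*(ℓ:ℂ)*η) τ * Acoef τ η ℓ ℓ z (lam+η)) := by
  rw [jT_TZ (x := 2*lam) τ η lam 0 (by push_cast; ring),
      jT_TZ (x := 2*z - 2*(ℓ:ℂ)*η) τ η z (-(ℓ:ℤ)) (by push_cast; ring),
      jT_TZ (x := 2*z) τ η z 0 (by push_cast; ring),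
      jT_TZ (x := 2*lam - 2*(ℓ:ℂ)*η) τ η lam (-(ℓ:ℤ)) (by push_cast; ring),
      Acoef_top1 τ η z lam ℓ, Acoef_top3 τ η z lam ℓ]
  have hr3 := rel_Qm τ η z ℓ ℓ
  have hr4 := rel_Qm τ η lam ℓ ℓ
  rw [show ((ℓ:ℤ) - (ℓ:ℤ)) = (0:ℤ) from by ring] at hr3 hr4
  linear_combination
    ((-1:ℂ)^ℓ * CC τ η ℓ ℓ * TZ τ η lam 0 * Pmm τ η lam ℓ ℓ
      / (∏ j ∈ Finset.range ℓ, TW τ η z lam ((j:ℤ)+1))) * hr3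
    - ((-1:ℂ)^ℓ * CC τ η ℓ ℓ * TZ τ η z 0 * Pmm τ η z ℓ ℓ
      / (∏ j ∈ Finset.range ℓ, TW τ η z lam ((j:ℤ)+1))) * hr4

lemma boundary_bot (τ η z lam : ℂ) (ℓ : ℕ) :
    jTheta 1 (2*lam) τ * (jTheta 1 (2*z + 2*(ℓ:ℂ)*η) τ * Acoef τ η ℓ 0 (z-η) lam)
      = jTheta 1 (2*z) τ * (jTheta 1 (2*lam + 2*(ℓ:ℂ)*η) τ * Acoef τ η ℓ 0 z (lam-η)) := by
  rw [jT_TZ (x := 2*lam) τ η lam 0 (by push_cast; ring),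
      jT_TZ (x := 2*z + 2*(ℓ:ℂ)*η) τ η z (ℓ:ℤ) (by push_cast; ring),
      jT_TZ (x := 2*z) τ η z 0 (by push_cast; ring),
      jT_TZ (x := 2*lam + 2*(ℓ:ℂ)*η) τ η lam (ℓ:ℤ) (by push_cast; ring),
      Acoef_bot2 τ η z lam ℓ, Acoef_bot4 τ η z lam ℓ]
  have hrz := rel_Q τ η z ℓ ℓ
  have hrl := rel_Q τ η lam ℓ ℓ
  rw [show ((ℓ:ℤ) - (ℓ:ℤ)) = (0:ℤ) from by ring] at hrz hrl
  linear_combination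
    (CC τ η ℓ 0 * TZ τ η lam 0 * Pzz τ η lam ℓ ℓ
      / (∏ j ∈ Finset.range ℓ, TW τ η z lam (-(j:ℤ)-1))) * hrz
    - (CC τ η ℓ 0 * TZ τ η z 0 * Pzz τ η z ℓ ℓ
      / (∏ j ∈ Finset.range ℓ, TW τ η z lam (-(j:ℤ)-1))) * hrl


set_option maxHeartbeats 2000000 in
/-- Baxter's T-Q relation for the one-site chain:
`T(λ)Q(λ)f = θ₁(2λ−2ℓη)·Q(λ+η)f + θ₁(2λ+2ℓη)·Q(λ−η)f`. -/
theorem one_site_TQ_relation (τ η lam : ℂ) (hτ : 0 < τ.im) (ℓ : ℕ)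
    (hgen : ∀ j : ℕ, 1 ≤ j → j ≤ 2*ℓ → jTheta 1 (2*(j : ℂ)*η) τ ≠ 0)
    (f : ℂ → ℂ) (z : ℂ) (hz : jTheta 1 (2*z) τ ≠ 0)
    (hden : ∀ c : ℤ, c.natAbs ≤ ℓ + 1 → jTheta 1 (2*z + 2*lam + 2*(c : ℂ)*η) τ ≠ 0) :
    TopOne τ η ℓ lam (Qop τ η ℓ lam f) z
      = jTheta 1 (2*lam - 2*(ℓ : ℂ)*η) τ * Qop τ η ℓ (lam + η) f z
        + jTheta 1 (2*lam + 2*(ℓ : ℂ)*η) τ * Qop τ η ℓ (lam - η) f z := by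
  unfold TopOne
  rw [div_eq_iff hz]
  unfold Qop
  have hS1 : (∑ k ∈ Finset.range (ℓ+1),
        Acoef τ η ℓ k (z+η) lam * f (z + η + (2*(k:ℂ) - (ℓ:ℂ))*η + lam))
      = (∑ k ∈ Finset.range ℓ,
          Acoef τ η ℓ k (z+η) lam * f (z + lam + (2*(k:ℂ) + 1 - (ℓ:ℂ))*η))
        + Acoef τ η ℓ ℓ (z+η) lam * f (z + lam + ((ℓ:ℂ)+1)*η) := by
    rw [Finset.sum_range_succ]
    congr 1
    · exact Finset.sum_congr rfl fun k _ => by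
        rw [show z + η + (2*(k:ℂ) - (ℓ:ℂ))*η + lam = z + lam + (2*(k:ℂ) + 1 - (ℓ:ℂ))*η from by
          ring]
    · rw [show z + η + (2*((ℓ:ℕ):ℂ) - (ℓ:ℂ))*η + lam = z + lam + ((ℓ:ℂ)+1)*η from by
        push_cast; ring]
  have hS2 : (∑ k ∈ Finset.range (ℓ+1),
        Acoef τ η ℓ k (z-η) lam * f (z - η + (2*(k:ℂ) - (ℓ:ℂ))*η + lam))
      = (∑ k ∈ Finset.range ℓ,
          Acoef τ η ℓ (k+1) (z-η) lam * f (z + lam + (2*(k:ℂ) + 1 - (ℓ:ℂ))*η))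
        + Acoef τ η ℓ 0 (z-η) lam * f (z + lam - ((ℓ:ℂ)+1)*η) := by
    rw [Finset.sum_range_succ']
    congr 1
    · exact Finset.sum_congr rfl fun k _ => by
        rw [show z - η + (2*((k+1:ℕ):ℂ) - (ℓ:ℂ))*η + lam
            = z + lam + (2*(k:ℂ) + 1 - (ℓ:ℂ))*η from by push_cast; ring]
    · rw [show z - η + (2*((0:ℕ):ℂ) - (ℓ:ℂ))*η + lam = z + lam - ((ℓ:ℂ)+1)*η from by
        push_cast; ring]
  have hS3 : (∑ k ∈ Finset.range (ℓ+1),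
        Acoef τ η ℓ k z (lam+η) * f (z + (2*(k:ℂ) - (ℓ:ℂ))*η + (lam+η)))
      = (∑ k ∈ Finset.range ℓ,
          Acoef τ η ℓ k z (lam+η) * f (z + lam + (2*(k:ℂ) + 1 - (ℓ:ℂ))*η))
        + Acoef τ η ℓ ℓ z (lam+η) * f (z + lam + ((ℓ:ℂ)+1)*η) := by
    rw [Finset.sum_range_succ]
    congr 1
    · exact Finset.sum_congr rfl fun k _ => by
        rw [show z + (2*(k:ℂ) - (ℓ:ℂ))*η + (lam+η) = z + lam + (2*(k:ℂ) + 1 - (ℓ:ℂ))*η from by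
          ring]
    · rw [show z + (2*((ℓ:ℕ):ℂ) - (ℓ:ℂ))*η + (lam+η) = z + lam + ((ℓ:ℂ)+1)*η from by
        push_cast; ring]
  have hS4 : (∑ k ∈ Finset.range (ℓ+1),
        Acoef τ η ℓ k z (lam-η) * f (z + (2*(k:ℂ) - (ℓ:ℂ))*η + (lam-η)))
      = (∑ k ∈ Finset.range ℓ,
          Acoef τ η ℓ (k+1) z (lam-η) * f (z + lam + (2*(k:ℂ) + 1 - (ℓ:ℂ))*η))
        + Acoef τ η ℓ 0 z (lam-η) * f (z + lam - ((ℓ:ℂ)+1)*η) := by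
    rw [Finset.sum_range_succ']
    congr 1
    · exact Finset.sum_congr rfl fun k _ => by
        rw [show z + (2*((k+1:ℕ):ℂ) - (ℓ:ℂ))*η + (lam-η)
            = z + lam + (2*(k:ℂ) + 1 - (ℓ:ℂ))*η from by push_cast; ring]
    · rw [show z + (2*((0:ℕ):ℂ) - (ℓ:ℂ))*η + (lam-η) = z + lam - ((ℓ:ℂ)+1)*η from by
        push_cast; ring]
  rw [hS1, hS2, hS3, hS4]
  have hkey : (jTheta 1 (2*lam) τ * jTheta 1 (2*z - 2*(ℓ:ℂ)*η) τ) * (∑ k ∈ Finset.range ℓ,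
          Acoef τ η ℓ k (z+η) lam * f (z + lam + (2*(k:ℂ) + 1 - (ℓ:ℂ))*η))
        + (jTheta 1 (2*lam) τ * jTheta 1 (2*z + 2*(ℓ:ℂ)*η) τ) * (∑ k ∈ Finset.range ℓ,
          Acoef τ η ℓ (k+1) (z-η) lam * f (z + lam + (2*(k:ℂ) + 1 - (ℓ:ℂ))*η))
      = (jTheta 1 (2*z) τ * jTheta 1 (2*lam - 2*(ℓ:ℂ)*η) τ) * (∑ k ∈ Finset.range ℓ,
          Acoef τ η ℓ k z (lam+η) * f (z + lam + (2*(k:ℂ) + 1 - (ℓ:ℂ))*η))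
        + (jTheta 1 (2*z) τ * jTheta 1 (2*lam + 2*(ℓ:ℂ)*η) τ) * (∑ k ∈ Finset.range ℓ,
          Acoef τ η ℓ (k+1) z (lam-η) * f (z + lam + (2*(k:ℂ) + 1 - (ℓ:ℂ))*η)) := by
    rw [Finset.mul_sum, Finset.mul_sum, Finset.mul_sum, Finset.mul_sum,
      ← Finset.sum_add_distrib, ← Finset.sum_add_distrib]
    refine Finset.sum_congr rfl fun k hk => ?_
    have h := interior_step τ η z lam hτ ℓ k (Finset.mem_range.mp hk) hgen hden
    linear_combination (f (z + lam + (2*(k:ℂ) + 1 - (ℓ:ℂ))*η)) * h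
  have hbt := boundary_top τ η z lam ℓ
  have hbb := boundary_bot τ η z lam ℓ
  linear_combination hkey + (f (z + lam + ((ℓ:ℂ)+1)*η)) * hbt
    + (f (z + lam - ((ℓ:ℂ)+1)*η)) * hbb

end
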